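/- Let D be an n×n diagonal matrix with positive diagonal entries and A an entrywise nonnegative n×n matrix. Then w(A)² ≤ w(DA)·w(D⁻¹A), where w denotes the numerical radius. -/

import Mathlib

open scoped Matrix

/-- The numerical radius of an `n × n` complex matrix, viewed as an operator on `ℂⁿ`
with the Euclidean norm. -/
noncomputable def matNumRad {n : ℕ} (M : Matrix (Fin n) (Fin n) ℂ) : ℝ :=
  sSup {r : ℝ | ∃ x : EuclideanSpace ℂ (Fin n), ‖x‖ = 1 ∧
    r = ‖(inner ℂ (Matrix.toEuclideanCLM (𝕜 := ℂ) M x) x : ℂ)‖}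

lemma quad_eq {n : ℕ} (M : Matrix (Fin n) (Fin n) ℂ) (x : EuclideanSpace ℂ (Fin n)) :
    (inner ℂ (Matrix.toEuclideanCLM (𝕜 := ℂ) M x) x : ℂ) =
      ∑ i, ∑ j, (starRingEnd ℂ) (M i j) * (starRingEnd ℂ) (x j) * x i := by
  have hM : ∀ i, (Matrix.toEuclideanCLM (𝕜 := ℂ) M x) i =
      M.mulVec (⇑(WithLp.equiv 2 (Fin n → ℂ)) x) i := fun i =>
    congrFun (Matrix.ofLp_toEuclideanCLM M x) i
  rw [PiLp.inner_apply]
  refine (Finset.sum_congr rfl fun i _ => ?_).trans rfl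
  rw [hM]
  simp [Matrix.mulVec, dotProduct, Finset.sum_mul, map_sum]
  rw [Finset.mul_sum]
  exact Finset.sum_congr rfl fun _ _ => mul_comm _ _

lemma bdd {n : ℕ} (M : Matrix (Fin n) (Fin n) ℂ) :
    BddAbove {r : ℝ | ∃ x : EuclideanSpace ℂ (Fin n), ‖x‖ = 1 ∧
      r = ‖(inner ℂ (Matrix.toEuclideanCLM (𝕜 := ℂ) M x) x : ℂ)‖} := by
  refine ⟨‖Matrix.toEuclideanCLM (𝕜 := ℂ) M‖, fun r ⟨x, hx, hr⟩ => ?_⟩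
  rw [hr]
  calc ‖(inner ℂ (Matrix.toEuclideanCLM (𝕜 := ℂ) M x) x : ℂ)‖
      ≤ ‖Matrix.toEuclideanCLM (𝕜 := ℂ) M x‖ * ‖x‖ := norm_inner_le_norm _ _
    _ ≤ ‖Matrix.toEuclideanCLM (𝕜 := ℂ) M‖ * ‖x‖ * ‖x‖ :=
        mul_le_mul_of_nonneg_right ((Matrix.toEuclideanCLM (𝕜 := ℂ) M).le_opNorm x)
          (norm_nonneg x)
    _ = ‖Matrix.toEuclideanCLM (𝕜 := ℂ) M‖ := by rw [hx]; ring

lemma real_quad {n : ℕ} (M : Matrix (Fin n) (Fin n) ℂ) (B : Matrix (Fin n) (Fin n) ℝ)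
    (hMB : ∀ i j, M i j = (B i j : ℂ)) (v : Fin n → ℝ)
    (u : EuclideanSpace ℂ (Fin n)) (hu : ∀ i, u i = (v i : ℂ)) :
    (inner ℂ (Matrix.toEuclideanCLM (𝕜 := ℂ) M u) u : ℂ) =
      ((∑ i, ∑ j, B i j * v j * v i : ℝ) : ℂ) := by
  rw [quad_eq]
  push_cast
  refine Finset.sum_congr rfl fun i _ => Finset.sum_congr rfl fun j _ => ?_
  rw [hMB, hu, hu]
  simp [Complex.conj_ofReal]

lemma matNumRad_nonneg {n : ℕ} (M : Matrix (Fin n) (Fin n) ℂ) : 0 ≤ matNumRad M := by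
  refine Real.sSup_nonneg ?_
  rintro r ⟨x, -, rfl⟩
  exact norm_nonneg _


/-- Matrix case (`m = 2`) of the numerical radius analogue of Cohen's inequality:
for a diagonal `D` with positive diagonal entries and entrywise nonnegative `A`,
`w(A)² ≤ w(DA) · w(D⁻¹A)`. -/
theorem matNumRad_sq_le (n : ℕ) (c : Fin n → ℝ) (hc : ∀ j, 0 < c j)
    (A : Matrix (Fin n) (Fin n) ℝ) (hA : ∀ i j, 0 ≤ A i j) :
    matNumRad (A.map (fun a => (a : ℂ))) ^ 2 ≤
      matNumRad (Matrix.diagonal (fun j => (c j : ℂ)) * A.map (fun a => (a : ℂ))) *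
      matNumRad ((Matrix.diagonal (fun j => (c j : ℂ)))⁻¹ * A.map (fun a => (a : ℂ))) := by
  set A' := A.map (fun a => (a : ℂ)) with hA'
  set M1 := Matrix.diagonal (fun j => (c j : ℂ)) * A' with hM1
  set M2 := (Matrix.diagonal (fun j => (c j : ℂ)))⁻¹ * A' with hM2
  have pairsum : ∀ f : Fin n → Fin n → ℝ,
      (∑ p : Fin n × Fin n, f p.1 p.2) = ∑ i, ∑ j, f i j := by
    intro f
    rw [← Finset.univ_product_univ, Finset.sum_product]
  have hM1e : ∀ i j, M1 i j = ((c i * A i j : ℝ) : ℂ) := by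
    intro i j
    rw [hM1, Matrix.diagonal_mul, hA', Matrix.map_apply]
    push_cast
    ring
  have hDinv : (Matrix.diagonal (fun j => (c j : ℂ)))⁻¹ =
      Matrix.diagonal (fun j => ((c j : ℂ))⁻¹) := by
    apply Matrix.inv_eq_left_inv
    rw [Matrix.diagonal_mul_diagonal]
    have : (fun i => ((c i : ℂ))⁻¹ * (c i : ℂ)) = fun _ => (1 : ℂ) := by
      funext i
      have h0 : (c i : ℂ) ≠ 0 := by exact_mod_cast (hc i).ne'
      field_simp
    rw [this, Matrix.diagonal_one]
  have hM2e : ∀ i j, M2 i j = (((c i)⁻¹ * A i j : ℝ) : ℂ) := by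
    intro i j
    rw [hM2, hDinv, Matrix.diagonal_mul, hA', Matrix.map_apply]
    push_cast
    ring
  have hw1 := matNumRad_nonneg M1
  have hw2 := matNumRad_nonneg M2
  have key : matNumRad A' ≤ Real.sqrt (matNumRad M1 * matNumRad M2) := by
    refine Real.sSup_le ?_ (Real.sqrt_nonneg _)
    rintro r ⟨x, hx, hr⟩
    -- the nonnegative comparison vector
    set v : Fin n → ℝ := fun i => ‖x i‖ with hv
    have hv0 : ∀ i, 0 ≤ v i := fun i => norm_nonneg _
    set u : EuclideanSpace ℂ (Fin n) := WithLp.toLp 2 (fun i => (v i : ℂ)) with huu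
    have hue : ∀ i, u i = (v i : ℂ) := fun i => rfl
    have hu1 : ‖u‖ = 1 := by
      rw [← hx, EuclideanSpace.norm_eq, EuclideanSpace.norm_eq]
      congr 1
      refine Finset.sum_congr rfl fun i _ => ?_
      rw [hue]
      simp [hv, abs_of_nonneg (hv0 i)]
    set s : ℝ := ∑ i, ∑ j, A i j * v j * v i with hs
    set t1 : ℝ := ∑ i, ∑ j, (c i * A i j) * v j * v i with ht1
    set t2 : ℝ := ∑ i, ∑ j, ((c i)⁻¹ * A i j) * v j * v i with ht2
    have hterm : ∀ i j, 0 ≤ A i j * v j * v i := fun i j =>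
      mul_nonneg (mul_nonneg (hA i j) (hv0 j)) (hv0 i)
    have hs0 : 0 ≤ s :=
      Finset.sum_nonneg fun i _ => Finset.sum_nonneg fun j _ => hterm i j
    have ht10 : 0 ≤ t1 := Finset.sum_nonneg fun i _ => Finset.sum_nonneg fun j _ =>
      mul_nonneg (mul_nonneg (mul_nonneg (hc i).le (hA i j)) (hv0 j)) (hv0 i)
    have ht20 : 0 ≤ t2 := Finset.sum_nonneg fun i _ => Finset.sum_nonneg fun j _ =>
      mul_nonneg (mul_nonneg (mul_nonneg (inv_nonneg.2 (hc i).le) (hA i j)) (hv0 j)) (hv0 i)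
    have hrs : r ≤ s := by
      rw [hr, quad_eq]
      refine (norm_sum_le _ _).trans ?_
      refine Finset.sum_le_sum fun i _ => ?_
      refine (norm_sum_le _ _).trans ?_
      refine Finset.sum_le_sum fun j _ => ?_
      rw [norm_mul, norm_mul]
      have h1 : ‖(starRingEnd ℂ) (A' i j)‖ = A i j := by
        simp [hA', Matrix.map_apply, abs_of_nonneg (hA i j)]
      have h2 : ‖(starRingEnd ℂ) (x j)‖ = v j := by simp [hv]
      rw [h1, h2]
    -- Cauchy-Schwarz
    have hCS : s ^ 2 ≤ t1 * t2 := by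
      have := Finset.sum_mul_sq_le_sq_mul_sq (Finset.univ : Finset (Fin n × Fin n))
        (fun p => Real.sqrt (c p.1 * A p.1 p.2 * v p.2 * v p.1))
        (fun p => Real.sqrt ((c p.1)⁻¹ * A p.1 p.2 * v p.2 * v p.1))
      have e1 : ∀ p : Fin n × Fin n,
          Real.sqrt (c p.1 * A p.1 p.2 * v p.2 * v p.1) *
            Real.sqrt ((c p.1)⁻¹ * A p.1 p.2 * v p.2 * v p.1) =
          A p.1 p.2 * v p.2 * v p.1 := by
        intro p
        have hp : 0 ≤ c p.1 * A p.1 p.2 * v p.2 * v p.1 :=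
          mul_nonneg (mul_nonneg (mul_nonneg (hc p.1).le (hA _ _)) (hv0 _)) (hv0 _)
        rw [← Real.sqrt_mul hp]
        have : c p.1 * A p.1 p.2 * v p.2 * v p.1 * ((c p.1)⁻¹ * A p.1 p.2 * v p.2 * v p.1)
            = (A p.1 p.2 * v p.2 * v p.1) ^ 2 := by
          have hcne : (c p.1 : ℝ) ≠ 0 := (hc p.1).ne'
          field_simp
        rw [this, Real.sqrt_sq (hterm p.1 p.2)]
      have e2 : ∀ p : Fin n × Fin n,
          Real.sqrt (c p.1 * A p.1 p.2 * v p.2 * v p.1) ^ 2 =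
            c p.1 * A p.1 p.2 * v p.2 * v p.1 := fun p => Real.sq_sqrt
          (mul_nonneg (mul_nonneg (mul_nonneg (hc p.1).le (hA _ _)) (hv0 _)) (hv0 _))
      have e3 : ∀ p : Fin n × Fin n,
          Real.sqrt ((c p.1)⁻¹ * A p.1 p.2 * v p.2 * v p.1) ^ 2 =
            (c p.1)⁻¹ * A p.1 p.2 * v p.2 * v p.1 := fun p => Real.sq_sqrt
          (mul_nonneg (mul_nonneg (mul_nonneg (inv_nonneg.2 (hc p.1).le) (hA _ _)) (hv0 _)) (hv0 _))
      simp only [e1, e2, e3] at this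
      calc s ^ 2 = (∑ p : Fin n × Fin n, A p.1 p.2 * v p.2 * v p.1) ^ 2 := by
            rw [hs, pairsum (fun i j => A i j * v j * v i)]
        _ ≤ (∑ p : Fin n × Fin n, c p.1 * A p.1 p.2 * v p.2 * v p.1) *
              (∑ p : Fin n × Fin n, (c p.1)⁻¹ * A p.1 p.2 * v p.2 * v p.1) := this
        _ = t1 * t2 := by
            rw [ht1, ht2, ← pairsum (fun i j => c i * A i j * v j * v i),
              ← pairsum (fun i j => (c i)⁻¹ * A i j * v j * v i)]
    have ht1w : t1 ≤ matNumRad M1 := by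
      refine le_csSup (bdd M1) ?_
      refine ⟨u, hu1, ?_⟩
      rw [real_quad M1 (Matrix.of fun i j => c i * A i j) (fun i j => hM1e i j) v u hue,
        Complex.norm_real, Real.norm_eq_abs]
      exact (abs_of_nonneg ht10).symm
    have ht2w : t2 ≤ matNumRad M2 := by
      refine le_csSup (bdd M2) ?_
      refine ⟨u, hu1, ?_⟩
      rw [real_quad M2 (Matrix.of fun i j => (c i)⁻¹ * A i j) (fun i j => hM2e i j) v u hue,
        Complex.norm_real, Real.norm_eq_abs]
      exact (abs_of_nonneg ht20).symm
    have hr0 : 0 ≤ r := hr ▸ norm_nonneg _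
    rw [Real.le_sqrt hr0]
    calc r ^ 2 ≤ s ^ 2 := pow_le_pow_left₀ hr0 hrs 2
      _ ≤ t1 * t2 := hCS
      _ ≤ matNumRad M1 * matNumRad M2 := mul_le_mul ht1w ht2w ht20 hw1
    exact mul_nonneg hw1 hw2
  calc matNumRad A' ^ 2 ≤ Real.sqrt (matNumRad M1 * matNumRad M2) ^ 2 :=
        pow_le_pow_left₀ (matNumRad_nonneg A') key 2
    _ = matNumRad M1 * matNumRad M2 := Real.sq_sqrt (mul_nonneg hw1 hw2)
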